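/- Under the hypotheses of the previous statement, if additionally lim_{a→∞} ⟨Ω, A U(a) A' Ω⟩ = ⟨Ω, A Ω⟩·⟨Ω, A' Ω⟩ (the cluster property), then ⟨Ω, A A' Ω⟩ = ⟨Ω, A Ω⟩·⟨Ω, A' Ω⟩. -/

import Mathlib

open Complex MeasureTheory
open scoped ComplexInnerProductSpace

/-- Let `U` be a strongly continuous one-parameter unitary group on a Hilbert space `H`
with a *positive* self-adjoint generator (expressed, equivalently, by the existence of a
holomorphic contractive extension `T` of `U` to the closed upper half-plane, i.e.
`U(a) = exp(iaP)` with `P ≥ 0`), leaving a unit vector `Ω` invariant.  If bounded operators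
`A, A'` satisfy `⟨Ω, A U(a) A' Ω⟩ = ⟨Ω, A' U(a)* A Ω⟩` for all `a`, and moreover the
cluster property `lim_{a→∞} ⟨Ω, A U(a) A' Ω⟩ = ⟨Ω, A Ω⟩ ⟨Ω, A' Ω⟩` holds, then
`⟨Ω, A A' Ω⟩ = ⟨Ω, A Ω⟩ ⟨Ω, A' Ω⟩`. -/
theorem lightlike_translation_cluster_factorization
    {H : Type*} [NormedAddCommGroup H] [InnerProductSpace ℂ H] [CompleteSpace H]
    (Ω : H) (hΩ : ‖Ω‖ = 1)
    (U : ℝ → H →L[ℂ] H)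
    (hUun : ∀ a, U a ∈ unitary (H →L[ℂ] H))
    (hU0 : U 0 = 1)
    (hUgrp : ∀ a b, U (a + b) = (U a).comp (U b))
    (hUcont : ∀ ξ : H, Continuous fun a => U a ξ)
    (hUΩ : ∀ a, U a Ω = Ω)
    -- positivity of the generator: contractive holomorphic extension to the upper half-plane
    (T : ℂ → H →L[ℂ] H)
    (hTr : ∀ a : ℝ, T (a : ℂ) = U a)
    (hTb : ∀ z : ℂ, 0 ≤ z.im → ‖T z‖ ≤ 1)
    (hTh : ∀ ξ η : H, DifferentiableOn ℂ (fun z => ⟪ξ, T z η⟫) {z : ℂ | 0 < z.im})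
    (hTc : ∀ ξ η : H, ContinuousOn (fun z => ⟪ξ, T z η⟫) {z : ℂ | 0 ≤ z.im})
    (A A' : H →L[ℂ] H)
    (hsym : ∀ a : ℝ,
      ⟪Ω, A (U a (A' Ω))⟫ = ⟪Ω, A' ((ContinuousLinearMap.adjoint (U a)) (A Ω))⟫)
    (hclus : Filter.Tendsto (fun a : ℝ => ⟪Ω, A (U a (A' Ω))⟫) Filter.atTop
      (nhds (⟪Ω, A Ω⟫ * ⟪Ω, A' Ω⟫))) :
    ⟪Ω, A (A' Ω)⟫ = ⟪Ω, A Ω⟫ * ⟪Ω, A' Ω⟫ := by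
  classical
  set L : ℂ := ⟪Ω, A Ω⟫ * ⟪Ω, A' Ω⟫ with hLdef
  set f : ℂ → ℂ := fun z => ⟪(ContinuousLinearMap.adjoint A) Ω, T z (A' Ω)⟫ with hfdef
  set g : ℂ → ℂ := fun z => ⟪A Ω, T z ((ContinuousLinearMap.adjoint A') Ω)⟫ with hgdef
  set p : ℂ → ℂ := fun z => (f z - L) * (g z - (starRingEnd ℂ) L) with hpdef
  -- boundary values
  have hfa : ∀ a : ℝ, f (a : ℂ) = ⟪Ω, A (U a (A' Ω))⟫ := by
    intro a
    simp only [hfdef, hTr a, ContinuousLinearMap.adjoint_inner_left]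
  have hga : ∀ a : ℝ, g (a : ℂ) = (starRingEnd ℂ) (f (a : ℂ)) := by
    intro a
    have h1 : (starRingEnd ℂ) (g (a : ℂ)) = f (a : ℂ) := by
      rw [hgdef]
      simp only [hTr a, inner_conj_symm]
      rw [← ContinuousLinearMap.adjoint_inner_right,
        ContinuousLinearMap.adjoint_inner_left, hfa a, hsym a]
    rw [← h1, Complex.conj_conj]
  have hpa : ∀ a : ℝ, p (a : ℂ) = (Complex.normSq (f (a : ℂ) - L) : ℂ) := by
    intro a
    rw [hpdef]
    simp only [hga a, ← map_sub]
    exact Complex.mul_conj _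
  -- bounds
  set M : ℝ := (‖(ContinuousLinearMap.adjoint A) Ω‖ * ‖A' Ω‖ + ‖L‖) *
    (‖A Ω‖ * ‖(ContinuousLinearMap.adjoint A') Ω‖ + ‖L‖) with hMdef
  have hfb : ∀ (ξ η : H) (z : ℂ), 0 ≤ z.im → ‖(⟪ξ, T z η⟫ : ℂ)‖ ≤ ‖ξ‖ * ‖η‖ := by
    intro ξ η z hz
    have h2 : ‖T z η‖ ≤ ‖η‖ := by
      calc ‖T z η‖ ≤ ‖T z‖ * ‖η‖ := (T z).le_opNorm η
        _ ≤ 1 * ‖η‖ := mul_le_mul_of_nonneg_right (hTb z hz) (norm_nonneg η)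
        _ = ‖η‖ := one_mul _
    calc ‖(⟪ξ, T z η⟫ : ℂ)‖ ≤ ‖ξ‖ * ‖T z η‖ := norm_inner_le_norm ξ (T z η)
      _ ≤ ‖ξ‖ * ‖η‖ := mul_le_mul_of_nonneg_left h2 (norm_nonneg ξ)
  have hpb : ∀ z : ℂ, 0 ≤ z.im → ‖p z‖ ≤ M := by
    intro z hz
    rw [hpdef]
    have h1 : ‖f z - L‖ ≤ ‖(ContinuousLinearMap.adjoint A) Ω‖ * ‖A' Ω‖ + ‖L‖ :=
      (norm_sub_le _ _).trans (add_le_add (hfb _ _ z hz) le_rfl)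
    have h2 : ‖g z - (starRingEnd ℂ) L‖ ≤ ‖A Ω‖ * ‖(ContinuousLinearMap.adjoint A') Ω‖ + ‖L‖ := by
      refine (norm_sub_le _ _).trans (add_le_add (hfb _ _ z hz) (le_of_eq ?_))
      simp
    calc ‖(f z - L) * (g z - (starRingEnd ℂ) L)‖
        = ‖f z - L‖ * ‖g z - (starRingEnd ℂ) L‖ := norm_mul _ _
      _ ≤ M := by
          rw [hMdef]
          exact mul_le_mul h1 h2 (norm_nonneg _) ((norm_nonneg _).trans h1)
  have hM0 : 0 ≤ M := le_trans (norm_nonneg _) (hpb I (by simp))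
  -- regularity
  have hSclo : closure {z : ℂ | 0 < z.im} = {z : ℂ | 0 ≤ z.im} := closure_setOf_lt_im 0
  have hpd : DifferentiableOn ℂ p {z : ℂ | 0 < z.im} :=
    ((hTh _ _).sub (differentiableOn_const L)).mul
      ((hTh _ _).sub (differentiableOn_const _))
  have hpc : ContinuousOn p {z : ℂ | 0 ≤ z.im} :=
    ((hTc _ _).sub continuousOn_const).mul ((hTc _ _).sub continuousOn_const)
  have hpdc : DiffContOnCl ℂ p {z : ℂ | 0 < z.im} := ⟨hpd, hSclo ▸ hpc⟩
  -- Phragmen-Lindelof: for c with ‖c‖ = 1 and c * p real-part-0 on ℝ, get (c * p z).re ≤ 0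
  have key : ∀ c : ℂ, ‖c‖ = 1 → (∀ a : ℝ, (c * p (a : ℂ)).re = 0) →
      ∀ z : ℂ, 0 ≤ z.im → (c * p z).re ≤ 0 := by
    intro c hc hcre z hz
    set F : ℂ → ℂ := fun w => Complex.exp (c * p (I * w)) with hFdef
    have hmaps : Set.MapsTo (fun w : ℂ => I * w) {w : ℂ | 0 < w.re} {z : ℂ | 0 < z.im} := by
      intro w hw
      simp only [Set.mem_setOf_eq, Complex.mul_im, Complex.I_re, Complex.I_im] at *
      linarith
    have hlin : DiffContOnCl ℂ (fun w : ℂ => I * w) {w : ℂ | 0 < w.re} :=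
      (differentiable_id.const_mul I).diffContOnCl
    have hcomp : DiffContOnCl ℂ (fun w : ℂ => p (I * w)) {w : ℂ | 0 < w.re} :=
      hpdc.comp hlin hmaps
    have hFd : DiffContOnCl ℂ F {w : ℂ | 0 < w.re} :=
      ⟨Complex.differentiable_exp.comp_differentiableOn
          ((differentiableOn_const c).mul hcomp.differentiableOn),
        Complex.continuous_exp.comp_continuousOn
          (continuousOn_const.mul hcomp.continuousOn)⟩
    have hFnorm : ∀ w : ℂ, ‖F w‖ = Real.exp ((c * p (I * w)).re) := fun w => by
      rw [hFdef]; simp [Complex.norm_exp]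
    have hFb : ∀ w : ℂ, 0 ≤ w.re → ‖F w‖ ≤ Real.exp M := by
      intro w hw
      rw [hFnorm]
      refine Real.exp_le_exp.2 ?_
      have him : 0 ≤ (I * w).im := by
        simp only [Complex.mul_im, Complex.I_re, Complex.I_im]; linarith
      calc (c * p (I * w)).re ≤ ‖c * p (I * w)‖ := Complex.re_le_norm _
        _ = ‖c‖ * ‖p (I * w)‖ := norm_mul _ _
        _ ≤ 1 * M := by rw [hc]; simpa using hpb _ him
        _ = M := one_mul M
    have hPL : ‖F (-I * z)‖ ≤ 1 := by
      refine PhragmenLindelof.right_half_plane_of_bounded_on_real hFd ?_ ?_ ?_ ?_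
      · refine ⟨1, one_lt_two, 0, Asymptotics.IsBigO.of_bound (Real.exp M) ?_⟩
        refine Filter.eventually_inf_principal.2 (Filter.Eventually.of_forall fun w hw => ?_)
        have : ‖Real.exp (0 * ‖w‖ ^ (1 : ℝ))‖ = 1 := by simp
        rw [this, mul_one]
        exact hFb w (le_of_lt hw)
      · refine ⟨Real.exp M, ?_⟩
        rw [Filter.eventually_map]
        filter_upwards [Filter.eventually_ge_atTop (0 : ℝ)] with x hx
        exact hFb x (by simpa using hx)
      · intro x
        have h1 : I * ((x : ℂ) * I) = ((-x : ℝ) : ℂ) := by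
          push_cast; ring_nf; rw [Complex.I_sq]; ring
        rw [hFnorm, h1, hcre (-x), Real.exp_zero]
      · simp only [Complex.mul_re, Complex.neg_re, Complex.neg_im, Complex.I_re, Complex.I_im]
        linarith
    have h2 : I * (-I * z) = z := by
      rw [← mul_assoc, mul_neg, Complex.I_mul_I, neg_neg, one_mul]
    rw [hFnorm, h2] at hPL
    calc (c * p z).re = Real.log (Real.exp ((c * p z).re)) := (Real.log_exp _).symm
      _ ≤ Real.log 1 := Real.log_le_log (Real.exp_pos _) hPL
      _ = 0 := Real.log_one
  -- imaginary part of p vanishes on the closed upper half-plane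
  have hrealI : ∀ a : ℝ, (I * p (a : ℂ)).re = 0 := by
    intro a; rw [hpa a]
    simp [Complex.mul_re]
  have hrealnI : ∀ a : ℝ, ((-I) * p (a : ℂ)).re = 0 := by
    intro a; rw [hpa a]
    simp [Complex.mul_re]
  have hpim : ∀ z : ℂ, 0 ≤ z.im → (p z).im = 0 := by
    intro z hz
    have h1 := key I (by simp) hrealI z hz
    have h2 := key (-I) (by simp) hrealnI z hz
    simp only [Complex.mul_re, Complex.I_re, Complex.I_im, Complex.neg_re, Complex.neg_im,
      zero_mul, one_mul, zero_sub, neg_zero, neg_mul, sub_zero, neg_neg, zero_add,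
      sub_neg_eq_add] at h1 h2
    linarith
  -- open mapping theorem: p is constant on the open upper half-plane
  have hSopen : IsOpen {z : ℂ | 0 < z.im} := by
    exact isOpen_lt continuous_const Complex.continuous_im
  have hpan : AnalyticOnNhd ℂ p {z : ℂ | 0 < z.im} := hpd.analyticOnNhd hSopen
  have hconn : IsPreconnected {z : ℂ | 0 < z.im} := (convex_halfSpace_im_gt 0).isPreconnected
  obtain ⟨w, hw⟩ : ∃ w, ∀ z ∈ {z : ℂ | 0 < z.im}, p z = w := by
    rcases hpan.is_constant_or_isOpen hconn with h | h
    · exact h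
    · exfalso
      have hopen : IsOpen (p '' {z : ℂ | 0 < z.im}) :=
        h _ (subset_refl _) hSopen
      have hmem : p I ∈ p '' {z : ℂ | 0 < z.im} := ⟨I, by simp, rfl⟩
      rcases Metric.isOpen_iff.1 hopen _ hmem with ⟨ε, hε, hball⟩
      have hmem2 : p I + ((ε / 2 : ℝ) : ℂ) * I ∈ p '' {z : ℂ | 0 < z.im} := by
        apply hball
        rw [Metric.mem_ball, dist_eq_norm]
        have h3 : p I + ((ε / 2 : ℝ) : ℂ) * I - p I = ((ε / 2 : ℝ) : ℂ) * I := by ring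
        rw [h3]
        simp only [norm_mul, Complex.norm_I, mul_one, Complex.norm_real, Real.norm_eq_abs]
        rw [abs_of_pos (by linarith)]
        linarith
      rcases hmem2 with ⟨z, hz, hpz⟩
      have him0 : (p z).im = 0 := hpim z (le_of_lt hz)
      have himI : (p I).im = 0 := hpim I (by simp)
      rw [hpz] at him0
      simp only [Complex.add_im, Complex.mul_im, Complex.ofReal_re, Complex.ofReal_im,
        Complex.I_re, Complex.I_im, mul_one, mul_zero, zero_add, himI] at him0
      linarith
  -- constancy extends to the boundary
  have hbnd : ∀ a : ℝ, p (a : ℂ) = w := by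
    intro a
    have hcw : ContinuousWithinAt p {z : ℂ | 0 ≤ z.im} (a : ℂ) :=
      hpc _ (by simp)
    have htend : Filter.Tendsto (fun t : ℝ => (a : ℂ) + t * I)
        (nhdsWithin 0 (Set.Ioi (0 : ℝ))) (nhdsWithin (a : ℂ) {z : ℂ | 0 ≤ z.im}) := by
      apply tendsto_nhdsWithin_of_tendsto_nhds_of_eventually_within
      · have hco : Continuous fun t : ℝ => (a : ℂ) + t * I :=
          continuous_const.add (Complex.continuous_ofReal.mul continuous_const)
        have := hco.tendsto 0
        simpa using this.mono_left nhdsWithin_le_nhds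
      · filter_upwards [self_mem_nhdsWithin] with t ht
        simp only [Set.mem_setOf_eq, Complex.add_im, Complex.ofReal_im, Complex.mul_im,
          Complex.ofReal_re, Complex.I_re, Complex.I_im, mul_one, mul_zero, zero_add, add_zero]
        exact le_of_lt ht
    have h1 : Filter.Tendsto (fun t : ℝ => p ((a : ℂ) + t * I))
        (nhdsWithin 0 (Set.Ioi (0 : ℝ))) (nhds (p (a : ℂ))) :=
      hcw.tendsto.comp htend
    have h2 : Filter.Tendsto (fun t : ℝ => p ((a : ℂ) + t * I))
        (nhdsWithin 0 (Set.Ioi (0 : ℝ))) (nhds w) := by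
      apply Filter.Tendsto.congr' _ tendsto_const_nhds
      filter_upwards [self_mem_nhdsWithin] with t ht
      refine (hw _ ?_).symm
      simp only [Set.mem_setOf_eq, Complex.add_im, Complex.ofReal_im, Complex.mul_im,
        Complex.ofReal_re, Complex.I_re, Complex.I_im, mul_one, mul_zero, zero_add, add_zero]
      exact ht
    exact tendsto_nhds_unique h1 h2
  -- the cluster property forces the constant to vanish
  have hLlim : Filter.Tendsto (fun a : ℝ => p (a : ℂ)) Filter.atTop (nhds 0) := by
    have h1 : Filter.Tendsto (fun a : ℝ => f (a : ℂ)) Filter.atTop (nhds L) := by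
      refine hclus.congr fun a => (hfa a).symm
    have h2 : Filter.Tendsto (fun a : ℝ => g (a : ℂ)) Filter.atTop
        (nhds ((starRingEnd ℂ) L)) := by
      have := (Complex.continuous_conj.tendsto L).comp h1
      exact this.congr fun a => (hga a).symm
    have h3 : Filter.Tendsto (fun a : ℝ => p (a : ℂ)) Filter.atTop
        (nhds ((L - L) * ((starRingEnd ℂ) L - (starRingEnd ℂ) L))) :=
      (h1.sub tendsto_const_nhds).mul (h2.sub tendsto_const_nhds)
    simpa using h3
  have hw0 : w = 0 := by
    have : Filter.Tendsto (fun _ : ℝ => w) Filter.atTop (nhds 0) :=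
      hLlim.congr fun a => hbnd a
    exact tendsto_nhds_unique tendsto_const_nhds this
  -- conclude
  have hp0 : p (0 : ℂ) = 0 := by
    have := hbnd 0
    rw [hw0] at this
    simpa using this
  have h00 : ((0 : ℝ) : ℂ) = (0 : ℂ) := by norm_num
  have hf0 : f (0 : ℂ) = L := by
    have hthis := hpa 0
    rw [h00, hp0] at hthis
    have hsq : Complex.normSq (f (0 : ℂ) - L) = 0 := by exact_mod_cast hthis.symm
    have h := sub_eq_zero.1 (Complex.normSq_eq_zero.1 hsq)
    exact h
  have hfinal : f (0 : ℂ) = ⟪Ω, A (A' Ω)⟫ := by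
    have : f ((0 : ℝ) : ℂ) = ⟪Ω, A (A' Ω)⟫ := by
      simp only [hfdef]
      rw [hTr 0, hU0]
      simp [ContinuousLinearMap.adjoint_inner_left]
    rwa [h00] at this
  rw [← hfinal, hf0]
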